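/- Let S = {s₁,…,sₙ} be a finite independent generating subset of an abelian group G, let A ⊆ G be finite, and let i ∈ [1,n]. Then ∂_S([A]_i) ≤ ∂_S(A), where [A]_i is the compression of A along sᵢ. -/

import Mathlib

/-- A finite subset `S` of an abelian group is independent if whenever an integral linear
combination `∑_{s ∈ S} k(s)·s` vanishes, every summand `k(s)·s` vanishes. -/
def IsIndependent {G : Type*} [AddCommGroup G] (S : Finset G) : Prop :=
  ∀ k : G → ℤ, ∑ s ∈ S, k s • s = 0 → ∀ s ∈ S, k s • s = 0

/-- The compression of a set `A` along `s` (relative to the complementary set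
`T = S ∖ {s}`): in each coset `g + ⟨s⟩` with `g ∈ ⟨T⟩`, the set `A` is replaced by the
arithmetic progression `{g, g+s, …, g+(k_g-1)s}` where `k_g = |A ∩ (g + ⟨s⟩)|`. -/
def compress {G : Type*} [AddCommGroup G] (s : G) (T : Set G) (A : Set G) : Set G :=
  ⋃ g ∈ (AddSubgroup.closure T : Set G),
    {x : G | ∃ k : ℕ, x = g + k • s ∧
      k < Nat.card {a : G // a ∈ A ∧ a - g ∈ AddSubgroup.zmultiples s}}

/-- The edge boundary `∂_S(A) = |{(a,s) ∈ A × S : a + s ∉ A}|` of a set `A` with respect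
to a finite set `S`, in a form applicable to arbitrary sets `A`. -/
noncomputable def edgeBoundarySet {G : Type*} [AddCommGroup G] (A : Set G) (S : Finset G) : ℕ :=
  Nat.card {q : G × G // q.1 ∈ A ∧ q.2 ∈ S ∧ q.1 + q.2 ∉ A}

/-- **Claim 2.2 (second part).** Let `S` be a finite independent generating subset of an
abelian group `G`, let `A ⊆ G` be finite, and let `sᵢ ∈ S`. Then
`∂_S([A]_i) ≤ ∂_S(A)`, where `[A]_i` is the compression of `A` along `sᵢ`. -/
theorem compress_edgeBoundary_le {G : Type*} [AddCommGroup G] [DecidableEq G]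
    (S : Finset G) (hind : IsIndependent S)
    (hgen : AddSubgroup.closure (S : Set G) = ⊤)
    (A : Finset G) (si : G) (hi : si ∈ S) :
    edgeBoundarySet (compress si (↑(S.erase si)) (↑A : Set G)) S
      ≤ edgeBoundarySet (↑A : Set G) S := by
  classical
  set T : Finset G := S.erase si with hT
  have hTsi : si ∉ T := Finset.notMem_erase si S
  have hST : S = insert si T := (Finset.insert_erase hi).symm
  set H : AddSubgroup G := AddSubgroup.zmultiples si with hH
  set m : ℕ := addOrderOf si with hm
  set π : G →+ G ⧸ H := QuotientAddGroup.mk' H with hπ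
  have hπ_eq : ∀ x y : G, π x = π y ↔ x - y ∈ H := fun x y =>
    QuotientAddGroup.eq_iff_sub_mem
  have hπ_si : ∀ x : G, π (x + si) = π x := by
    intro x
    rw [hπ_eq, hH]
    simp only [add_sub_cancel_left]
    exact AddSubgroup.mem_zmultiples si
  have hπ_nsmul : ∀ (x : G) (k : ℕ), π (x + k • si) = π x := by
    intro x k
    induction k with
    | zero => simp
    | succ n ih => rw [succ_nsmul, ← add_assoc, hπ_si, ih]
  -- independence consequence: no nonzero multiple of si lies in ⟨T⟩
  have hzero : ∀ z : ℤ, z • si ∈ AddSubgroup.closure (T : Set G) → z • si = 0 := by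
    intro z hz
    rw [← Submodule.span_int_eq_addSubgroupClosure, Submodule.mem_toAddSubgroup] at hz
    obtain ⟨f, -, hf⟩ := Submodule.mem_span_finset.1 hz
    have hsum : ∑ s ∈ S, (fun x => if x = si then -z else f x) s • s = 0 := by
      rw [hST, Finset.sum_insert hTsi]
      have h1 : ∑ x ∈ T, (fun x => if x = si then -z else f x) x • x = ∑ x ∈ T, f x • x := by
        refine Finset.sum_congr rfl fun x hx => ?_
        simp [Finset.ne_of_mem_erase hx]
      rw [h1]
      have h2 : ∑ x ∈ T, f x • x = z • si := hf
      rw [h2]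
      simp [neg_smul]
    have h2 := hind _ hsum si hi
    simpa [neg_smul, neg_eq_zero] using h2
  have huniq : ∀ g ∈ AddSubgroup.closure (T : Set G), ∀ g' ∈ AddSubgroup.closure (T : Set G),
      π g = π g' → g = g' := by
    intro g hg g' hg' h
    rw [hπ_eq, hH] at h
    obtain ⟨z, hz⟩ := AddSubgroup.mem_zmultiples_iff.1 h
    have h0 : z • si = 0 := hzero z (by rw [hz]; exact sub_mem hg hg')
    have h1 : g - g' = 0 := by rw [← hz, h0]
    exact sub_eq_zero.1 h1
  have htop : AddSubgroup.closure (T : Set G) ⊔ H = ⊤ := by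
    rw [hH, AddSubgroup.zmultiples_eq_closure, ← AddSubgroup.closure_union, ← hgen]
    congr 1
    rw [hST, Finset.coe_insert, Set.insert_eq, Set.union_comm]
  have hrep : ∀ q : G ⧸ H, ∃ g, g ∈ AddSubgroup.closure (T : Set G) ∧ π g = q := by
    intro q
    obtain ⟨x, rfl⟩ := QuotientAddGroup.mk'_surjective H q
    have hx : x ∈ AddSubgroup.closure (T : Set G) ⊔ H := by
      rw [htop]; exact AddSubgroup.mem_top x
    obtain ⟨y, hy, z, hz, hyz⟩ := AddSubgroup.mem_sup.1 hx
    refine ⟨y, hy, ?_⟩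
    show π y = π x
    rw [hπ_eq]
    have : y - x = -z := by rw [← hyz]; abel
    rw [this]
    exact neg_mem hz
  choose ρ hρc hρπ using hrep
  set cnt : G ⧸ H → ℕ := fun q => (A.filter fun a => π a = q).card with hcnt
  have hcard : ∀ g : G,
      Nat.card {a : G // a ∈ A ∧ a - g ∈ AddSubgroup.zmultiples si} = cnt (π g) := by
    intro g
    have e : {a : G // a ∈ A ∧ a - g ∈ AddSubgroup.zmultiples si}
        ≃ {a : G // a ∈ A.filter fun a => π a = π g} := by
      refine Equiv.subtypeEquivRight fun a => ?_
      simp only [Finset.mem_filter, Finset.mem_coe, Set.mem_setOf_eq]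
      rw [hπ_eq, hH]
    rw [Nat.card_congr e]
    exact Nat.card_eq_finsetCard _
  -- reduction of exponents mod the order
  have hzred : 0 < m → ∀ z : ℤ, ∃ j : ℕ, j < m ∧ (j • si : G) = z • si := by
    intro hm0 z
    have hmz : ((m : ℕ) : ℤ) ≠ 0 := by exact_mod_cast hm0.ne'
    have h2 : 0 ≤ z % (m : ℤ) := Int.emod_nonneg z hmz
    have h1 : z % (m : ℤ) < (m : ℤ) := Int.emod_lt_of_pos z (by exact_mod_cast hm0)
    refine ⟨(z % (m : ℤ)).toNat, by omega, ?_⟩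
    have h3 : (((z % (m : ℤ)).toNat : ℕ) : ℤ) = z % (m : ℤ) := Int.toNat_of_nonneg h2
    have h4 : ((m : ℕ) : ℤ) ∣ z - z % (m : ℤ) := ⟨z / (m : ℤ), by rw [Int.emod_def]; ring⟩
    have h5 : (z - z % (m : ℤ)) • si = 0 := by
      refine addOrderOf_dvd_iff_zsmul_eq_zero.1 ?_
      rw [← hm]; exact h4
    have h6 : (z % (m : ℤ)) • si = z • si := by
      have h7 : z • si - (z % (m : ℤ)) • si = 0 := by rw [← sub_smul]; exact h5
      exact (sub_eq_zero.1 h7).symm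
    rw [← natCast_zsmul, h3, h6]
  have hnsmul_inj : ∀ j j' : ℕ, (j < m ∨ m = 0) → (j' < m ∨ m = 0) →
      (j • si : G) = j' • si → j = j' := by
    intro j j' hj hj' he
    have h0 : ((j : ℤ) - (j' : ℤ)) • si = 0 := by
      rw [sub_smul, natCast_zsmul, natCast_zsmul, he, sub_self]
    have hdvd : ((m : ℕ) : ℤ) ∣ ((j : ℤ) - (j' : ℤ)) := by
      have := addOrderOf_dvd_iff_zsmul_eq_zero.2 h0
      rwa [← hm] at this
    rcases Nat.eq_zero_or_pos m with h | h
    · rw [h] at hdvd; simp only [Nat.cast_zero, zero_dvd_iff] at hdvd; omega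
    · have hjm : j < m := hj.resolve_right (by omega)
      have hj'm : j' < m := hj'.resolve_right (by omega)
      have habs : |(j : ℤ) - (j' : ℤ)| < ((m : ℕ) : ℤ) := by rw [abs_lt]; omega
      have := Int.eq_zero_of_abs_lt_dvd hdvd habs
      omega
  have hcnt_le : ∀ q, 0 < m → cnt q ≤ m := by
    intro q hm0
    have hsub : (A.filter fun a => π a = q) ⊆ (Finset.range m).image fun j => ρ q + j • si := by
      intro a ha
      rw [Finset.mem_filter] at ha
      have h1 : π a = π (ρ q) := by rw [hρπ q, ha.2]
      rw [hπ_eq, hH] at h1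
      obtain ⟨z, hz⟩ := AddSubgroup.mem_zmultiples_iff.1 h1
      obtain ⟨j, hj, hje⟩ := hzred hm0 z
      refine Finset.mem_image.2 ⟨j, Finset.mem_range.2 hj, ?_⟩
      rw [hje, hz]; abel
    calc cnt q ≤ ((Finset.range m).image fun j => ρ q + j • si).card :=
          Finset.card_le_card hsub
      _ ≤ m := le_trans Finset.card_image_le (by simp)
  -- membership in the compressed set
  have hmemB : ∀ x : G, x ∈ compress si (↑T : Set G) (↑A : Set G) ↔
      ∃ k : ℕ, k < cnt (π x) ∧ x = ρ (π x) + k • si := by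
    intro x
    constructor
    · intro hx
      simp only [compress, Set.mem_iUnion, SetLike.mem_coe, Set.mem_setOf_eq] at hx
      obtain ⟨g, hg, k, hxe, hk⟩ := hx
      rw [hcard g] at hk
      have hπx : π x = π g := by rw [hxe]; exact hπ_nsmul g k
      have hgρ : g = ρ (π x) := huniq g hg (ρ (π x)) (hρc _) (by rw [hρπ]; exact hπx.symm)
      exact ⟨k, by rw [hπx]; exact hk, by rw [← hgρ]; exact hxe⟩
    · rintro ⟨k, hk, hxe⟩
      simp only [compress, Set.mem_iUnion, SetLike.mem_coe, Set.mem_setOf_eq]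
      refine ⟨ρ (π x), hρc _, k, hxe, ?_⟩
      rw [hcard, hρπ]
      exact hk
  have hBfin : (compress si (↑T : Set G) (↑A : Set G)).Finite := by
    refine Set.Finite.subset
      (Finset.finite_toSet (A.biUnion fun a => (Finset.range A.card).image fun k => ρ (π a) + k • si)) ?_
    intro x hx
    obtain ⟨k, hk, hxe⟩ := (hmemB x).1 hx
    have hpos : 0 < cnt (π x) := lt_of_le_of_lt (Nat.zero_le k) hk
    rw [hcnt] at hpos
    obtain ⟨a, ha⟩ := Finset.card_pos.1 hpos
    rw [Finset.mem_filter] at ha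
    refine Finset.mem_coe.2 (Finset.mem_biUnion.2 ⟨a, ha.1, Finset.mem_image.2 ⟨k, ?_, ?_⟩⟩)
    · refine Finset.mem_range.2 (lt_of_lt_of_le hk ?_)
      rw [hcnt]
      exact Finset.card_filter_le _ _
    · rw [ha.2]; exact hxe.symm
  set Bf : Finset G := hBfin.toFinset with hBf
  have hmemBf : ∀ x : G, x ∈ Bf ↔ ∃ k : ℕ, k < cnt (π x) ∧ x = ρ (π x) + k • si := by
    intro x
    rw [hBf, Set.Finite.mem_toFinset]
    exact hmemB x
  have hfspec : ∀ x ∈ Bf, (fun x => if h : ∃ k : ℕ, k < cnt (π x) ∧ x = ρ (π x) + k • si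
      then h.choose else 0) x < cnt (π x) ∧
      x = ρ (π x) + ((fun x => if h : ∃ k : ℕ, k < cnt (π x) ∧ x = ρ (π x) + k • si
      then h.choose else 0) x) • si := by
    intro x hx
    have h := (hmemBf x).1 hx
    simp only [dif_pos h]
    exact h.choose_spec
  set f : G → ℕ := fun x => if h : ∃ k : ℕ, k < cnt (π x) ∧ x = ρ (π x) + k • si
      then h.choose else 0 with hf
  set Qs : Finset (G ⧸ H) := (A ∪ Bf).image fun a => π a with hQs
  have hEdge : ∀ F : Finset G, (∀ a ∈ F, π a ∈ Qs) →
      edgeBoundarySet (↑F : Set G) S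
        = ∑ s ∈ S, ∑ q ∈ Qs, (F.filter fun a => a + s ∉ F ∧ π a = q).card := by
    intro F hF
    have h1 : edgeBoundarySet (↑F : Set G) S = ((F ×ˢ S).filter fun p => p.1 + p.2 ∉ F).card := by
      simp only [edgeBoundarySet, ← Nat.card_eq_finsetCard]
      refine Nat.card_congr (Equiv.subtypeEquivRight fun p => ?_)
      simp [Finset.mem_filter, Finset.mem_product, and_assoc]
    rw [h1, Finset.card_eq_sum_card_fiberwise (f := Prod.snd) (t := S)
      (fun p hp => (Finset.mem_product.1 (Finset.mem_filter.1 hp).1).2)]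
    refine Finset.sum_congr rfl fun s hs => ?_
    have h2 : ((F ×ˢ S).filter fun p => p.1 + p.2 ∉ F).filter (fun p => p.snd = s)
        = (F.filter fun a => a + s ∉ F) ×ˢ {s} := by
      ext ⟨a, b⟩
      simp only [Finset.mem_filter, Finset.mem_product, Finset.mem_singleton]
      constructor
      · rintro ⟨⟨⟨h3, h4⟩, h5⟩, rfl⟩; exact ⟨⟨h3, h5⟩, rfl⟩
      · rintro ⟨⟨h3, h5⟩, rfl⟩; exact ⟨⟨⟨h3, hs⟩, h5⟩, rfl⟩
    rw [h2, Finset.card_product, Finset.card_singleton, mul_one,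
      Finset.card_eq_sum_card_fiberwise (f := fun a => π a) (t := Qs)
        (fun a ha => hF a (Finset.mem_filter.1 ha).1)]
    refine Finset.sum_congr rfl fun q hq => ?_
    rw [Finset.filter_filter]
  have hcov1 : ∀ a ∈ A, π a ∈ Qs :=
    fun a ha => Finset.mem_image.2 ⟨a, Finset.mem_union_left _ ha, rfl⟩
  have hcov2 : ∀ a ∈ Bf, π a ∈ Qs :=
    fun a ha => Finset.mem_image.2 ⟨a, Finset.mem_union_right _ ha, rfl⟩
  have hBeq : compress si (↑T : Set G) (↑A : Set G) = (↑Bf : Set G) := by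
    rw [hBf, Set.Finite.coe_toFinset]
  rw [hBeq, hEdge Bf hcov2, hEdge A hcov1]
  refine Finset.sum_le_sum fun s hs => Finset.sum_le_sum fun q hq => ?_
  by_cases hssi : s = si
  · -- direction si
    rw [hssi]
    rcases Nat.eq_zero_or_pos (Bf.filter fun a => a + si ∉ Bf ∧ π a = q).card with h0 | hpos
    · rw [h0]; exact Nat.zero_le _
    obtain ⟨a, ha⟩ := Finset.card_pos.1 hpos
    rw [Finset.mem_filter] at ha
    obtain ⟨haB, hanotB, haq⟩ := ha
    have hkey : ∀ b, b ∈ Bf → b + si ∉ Bf → π b = q → f b + 1 = cnt q := by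
      intro b hb hbs hbq
      obtain ⟨hfb, hbe⟩ := hfspec b hb
      rw [hbq] at hfb
      by_contra hne
      have hlt : f b + 1 < cnt q := by omega
      apply hbs
      rw [hmemBf]
      have hπbs : π (b + si) = q := by rw [hπ_si, hbq]
      refine ⟨f b + 1, by rw [hπbs]; exact hlt, ?_⟩
      rw [hπbs]
      have hbe' : b = ρ q + f b • si := by rw [← hbq]; exact hbe
      conv_lhs => rw [hbe']
      rw [succ_nsmul]
      exact add_assoc _ _ _
    have hcnt_pos : 0 < cnt q := by have := hkey a haB hanotB haq; omega
    have hone : (Bf.filter fun x => x + si ∉ Bf ∧ π x = q) ⊆ {ρ q + (cnt q - 1) • si} := by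
      intro b hb
      rw [Finset.mem_filter] at hb
      have h4 := hkey b hb.1 hb.2.1 hb.2.2
      have hbe' : b = ρ q + f b • si := by
        rw [← hb.2.2]; exact (hfspec b hb.1).2
      rw [Finset.mem_singleton, hbe', show f b = cnt q - 1 by omega]
    have hLHS : (Bf.filter fun x => x + si ∉ Bf ∧ π x = q).card ≤ 1 := by
      calc (Bf.filter fun x => x + si ∉ Bf ∧ π x = q).card
          ≤ ({ρ q + (cnt q - 1) • si} : Finset G).card := Finset.card_le_card hone
        _ = 1 := Finset.card_singleton _
    have hnotfull : m = 0 ∨ cnt q < m := by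
      by_contra hcon
      push_neg at hcon
      obtain ⟨hm0, hge⟩ := hcon
      have hm0' : 0 < m := Nat.pos_of_ne_zero hm0
      have hmq : cnt q = m := le_antisymm (hcnt_le q hm0') hge
      apply hanotB
      rw [hmemBf]
      have hπas : π (a + si) = q := by rw [hπ_si, haq]
      obtain ⟨hfa, hae⟩ := hfspec a haB
      rw [haq] at hfa
      have h4 := hkey a haB hanotB haq
      refine ⟨0, by rw [hπas]; omega, ?_⟩
      rw [hπas]
      have hae' : a = ρ q + f a • si := by rw [← haq]; exact hae
      have h5 : (f a + 1) • si = (0 : G) := by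
        rw [show f a + 1 = m by omega, hm]
        exact addOrderOf_nsmul_eq_zero si
      calc a + si = ρ q + (f a + 1) • si := by
            conv_lhs => rw [hae']
            rw [succ_nsmul]
            exact add_assoc _ _ _
        _ = ρ q + 0 • si := by rw [h5, zero_nsmul]
    have hRHS : 1 ≤ (A.filter fun x => x + si ∉ A ∧ π x = q).card := by
      rw [Nat.one_le_iff_ne_zero, Ne, Finset.card_eq_zero, ← Ne,
        ← Finset.nonempty_iff_ne_empty]
      by_contra hcon
      rw [Finset.not_nonempty_iff_eq_empty, Finset.filter_eq_empty_iff] at hcon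
      have hA : ∀ x ∈ A, π x = q → x + si ∈ A := by
        intro x hx hxq
        by_contra hxs
        exact hcon hx ⟨hxs, hxq⟩
      have hcnt_pos' : 0 < (A.filter fun a => π a = q).card := by
        rw [hcnt] at hcnt_pos; exact hcnt_pos
      obtain ⟨a₀, ha₀⟩ := Finset.card_pos.1 hcnt_pos'
      rw [Finset.mem_filter] at ha₀
      have hchain : ∀ k : ℕ, a₀ + k • si ∈ A := by
        intro k
        induction k with
        | zero => simpa using ha₀.1
        | succ n ih =>
          have hπn : π (a₀ + n • si) = q := by rw [hπ_nsmul, ha₀.2]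
          have h7 := hA _ ih hπn
          rw [succ_nsmul, ← add_assoc]
          exact h7
      rcases hnotfull with hm0 | hlt
      · have hinj : Set.InjOn (fun k : ℕ => a₀ + k • si) ↑(Finset.range (A.card + 1)) := by
          intro j _ j' _ he
          simp only at he
          exact hnsmul_inj j j' (Or.inr hm0) (Or.inr hm0) (add_left_cancel he)
        have hsub2 : (Finset.range (A.card + 1)).image (fun k => a₀ + k • si) ⊆ A := by
          intro x hx
          obtain ⟨k, _, rfl⟩ := Finset.mem_image.1 hx
          exact hchain k
        have h8 := Finset.card_le_card hsub2
        rw [Finset.card_image_of_injOn hinj, Finset.card_range] at h8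
        omega
      · have hm0' : 0 < m := lt_of_le_of_lt (Nat.zero_le _) hlt
        have hinj : Set.InjOn (fun k : ℕ => a₀ + k • si) ↑(Finset.range m) := by
          intro j hj j' hj' he
          simp only [Finset.coe_range, Set.mem_Iio] at hj hj'
          simp only at he
          exact hnsmul_inj j j' (Or.inl hj) (Or.inl hj') (add_left_cancel he)
        have hsub2 : (Finset.range m).image (fun k => a₀ + k • si)
            ⊆ A.filter fun x => π x = q := by
          intro x hx
          obtain ⟨k, hk, rfl⟩ := Finset.mem_image.1 hx
          exact Finset.mem_filter.2 ⟨hchain k, by rw [hπ_nsmul, ha₀.2]⟩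
        have h8 := Finset.card_le_card hsub2
        rw [Finset.card_image_of_injOn hinj, Finset.card_range] at h8
        simp only [hcnt] at hlt
        omega
    exact le_trans hLHS hRHS
  · -- direction s ≠ si
    have hsT : s ∈ T := Finset.mem_erase.2 ⟨hssi, hs⟩
    have hsTc : s ∈ AddSubgroup.closure (T : Set G) := AddSubgroup.subset_closure hsT
    have hρadd : ρ (q + π s) = ρ q + s :=
      huniq _ (hρc _) _ (add_mem (hρc q) hsTc) (by rw [hρπ, map_add, hρπ])
    have hmaps : ∀ b ∈ Bf.filter fun x => x + s ∉ Bf ∧ π x = q,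
        f b ∈ Finset.Ico (cnt (q + π s)) (cnt q) := by
      intro b hb
      rw [Finset.mem_filter] at hb
      obtain ⟨hfb, hbe⟩ := hfspec b hb.1
      rw [hb.2.2] at hfb
      refine Finset.mem_Ico.2 ⟨?_, hfb⟩
      by_contra hcon
      push_neg at hcon
      apply hb.2.1
      rw [hmemBf]
      have hπbs : π (b + s) = q + π s := by rw [map_add, hb.2.2]
      refine ⟨f b, by rw [hπbs]; exact hcon, ?_⟩
      rw [hπbs, hρadd]
      have hbe' : b = ρ q + f b • si := by rw [← hb.2.2]; exact hbe
      conv_lhs => rw [hbe']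
      exact add_right_comm _ _ _
    have hinjf : Set.InjOn f ↑(Bf.filter fun x => x + s ∉ Bf ∧ π x = q) := by
      intro b hb b' hb' he
      rw [Finset.mem_coe, Finset.mem_filter] at hb hb'
      have h1 : b = ρ q + f b • si := by rw [← hb.2.2]; exact (hfspec b hb.1).2
      have h2 : b' = ρ q + f b' • si := by rw [← hb'.2.2]; exact (hfspec b' hb'.1).2
      rw [h1, h2, he]
    have hLHS : (Bf.filter fun x => x + s ∉ Bf ∧ π x = q).card ≤ cnt q - cnt (q + π s) := by
      calc (Bf.filter fun x => x + s ∉ Bf ∧ π x = q).card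
          ≤ (Finset.Ico (cnt (q + π s)) (cnt q)).card :=
            Finset.card_le_card_of_injOn f hmaps hinjf
        _ = cnt q - cnt (q + π s) := Nat.card_Ico _ _
    have e1 : A.filter (fun x => x + s ∉ A ∧ π x = q)
        = (A.filter fun x => π x = q).filter fun x => x + s ∉ A := by
      rw [Finset.filter_filter]
      ext x
      simp only [Finset.mem_filter]
      tauto
    have e2 : A.filter (fun x => x + s ∈ A ∧ π x = q)
        = (A.filter fun x => π x = q).filter fun x => ¬ x + s ∉ A := by
      rw [Finset.filter_filter]
      ext x
      simp only [Finset.mem_filter, not_not]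
      tauto
    have hsplit : (A.filter fun x => x + s ∉ A ∧ π x = q).card
        + (A.filter fun x => x + s ∈ A ∧ π x = q).card = cnt q := by
      rw [e1, e2, hcnt]
      exact Finset.card_filter_add_card_filter_not _
    have hX1 : (A.filter fun x => x + s ∈ A ∧ π x = q).card ≤ cnt (q + π s) := by
      rw [hcnt]
      refine Finset.card_le_card_of_injOn (fun x => x + s) ?_ ?_
      · intro x hx
        rw [Finset.mem_coe, Finset.mem_filter] at hx ⊢
        exact ⟨hx.2.1, by rw [map_add, hx.2.2]⟩
      · intro x _ y _ h
        exact add_right_cancel h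
    omega
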